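/- For the biweight kernel K(u) = (15/16)(1-u²)²·1_{[-1,1]}(u), for every x > 0 one has ⟨K, K(x·)⟩ / ‖K‖² = (1/16)[21m - 6x²m⁵ + x⁴m⁹], where m = min(1/x, 1). -/

import Mathlib

set_option maxHeartbeats 1000000


open MeasureTheory

private lemma biweight_aux (K : ℝ → ℝ)
    (hK : ∀ u, K u = Set.indicator (Set.Icc (-1 : ℝ) 1) (fun v => 15 / 16 * (1 - v ^ 2) ^ 2) u)
    (x : ℝ) (hx : 0 < x) :
    ∫ u, K u * K (x * u)
      = 225/256 * (2*(min (1/x) 1) - (2*(2*x^2+2)/3)*(min (1/x) 1)^3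
          + (2*(x^4+4*x^2+1)/5)*(min (1/x) 1)^5 - (2*(2*x^4+2*x^2)/7)*(min (1/x) 1)^7
          + (2*x^4/9)*(min (1/x) 1)^9) := by
  set m := min (1/x) 1 with hm
  have hm0 : 0 < m := lt_min (by positivity) one_pos
  have hm1 : m ≤ 1 := min_le_right _ _
  have hmx : x * m ≤ 1 := by
    have h1 : m ≤ 1/x := min_le_left _ _
    have := mul_le_mul_of_nonneg_left h1 hx.le
    calc x * m ≤ x * (1/x) := this
      _ = 1 := by field_simp
  have hpt : ∀ u, K u * K (x * u)
      = Set.indicator (Set.Icc (-m) m)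
          (fun u => (15/16 : ℝ)^2 * ((1-u^2)*(1-(x*u)^2))^2) u := by
    intro u
    rcases le_or_gt |u| m with h | h
    · obtain ⟨hul, hur⟩ := abs_le.mp h
      have h1 : u ∈ Set.Icc (-1:ℝ) 1 := ⟨by linarith, by linarith⟩
      have h2 : x * u ∈ Set.Icc (-1:ℝ) 1 := by
        constructor
        · nlinarith
        · nlinarith
      rw [hK u, hK (x*u), Set.indicator_of_mem h1, Set.indicator_of_mem h2,
        Set.indicator_of_mem (Set.mem_Icc.mpr ⟨hul, hur⟩)]
      ring
    · have hnot : u ∉ Set.Icc (-m) m := by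
        intro hmem
        obtain ⟨a, b⟩ := Set.mem_Icc.mp hmem
        exact absurd (abs_le.mpr ⟨a, b⟩) (not_le.mpr h)
      rw [Set.indicator_of_notMem hnot]
      rcases min_cases (1/x) 1 with ⟨hmeq, hle⟩ | ⟨hmeq, hle⟩
      · have h2 : x * u ∉ Set.Icc (-1:ℝ) 1 := by
          intro hmem
          obtain ⟨a, b⟩ := Set.mem_Icc.mp hmem
          have : |x * u| ≤ 1 := abs_le.mpr ⟨a, b⟩
          rw [abs_mul, abs_of_pos hx] at this
          have hxm : x * m = 1 := by rw [hm, hmeq]; field_simp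
          nlinarith [abs_nonneg u]
        rw [hK (x*u), Set.indicator_of_notMem h2, mul_zero]
      · have h1 : u ∉ Set.Icc (-1:ℝ) 1 := by
          intro hmem
          obtain ⟨a, b⟩ := Set.mem_Icc.mp hmem
          have : |u| ≤ 1 := abs_le.mpr ⟨a, b⟩
          rw [hm, hmeq] at h
          linarith
        rw [hK u, Set.indicator_of_notMem h1, zero_mul]
  simp only [hpt]
  rw [MeasureTheory.integral_indicator measurableSet_Icc,
    MeasureTheory.integral_Icc_eq_integral_Ioc,
    ← intervalIntegral.integral_of_le (by linarith : -m ≤ m)]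
  have key : ∀ u ∈ Set.uIcc (-m) m,
      HasDerivAt (fun u : ℝ => 225/256 * (u - (2*x^2+2)*u^3/3 + (x^4+4*x^2+1)*u^5/5
        - (2*x^4+2*x^2)*u^7/7 + x^4*u^9/9))
        ((15/16 : ℝ)^2 * ((1-u^2)*(1-(x*u)^2))^2) u := by
    intro u _
    have h1 : HasDerivAt (fun u : ℝ => u) 1 u := hasDerivAt_id u
    have h3 : HasDerivAt (fun u : ℝ => u^3) (3*u^2) u := by
      simpa using hasDerivAt_pow 3 u
    have h5 : HasDerivAt (fun u : ℝ => u^5) (5*u^4) u := by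
      simpa using hasDerivAt_pow 5 u
    have h7 : HasDerivAt (fun u : ℝ => u^7) (7*u^6) u := by
      simpa using hasDerivAt_pow 7 u
    have h9 : HasDerivAt (fun u : ℝ => u^9) (9*u^8) u := by
      simpa using hasDerivAt_pow 9 u
    have H := (((((h1.sub ((h3.const_mul (2*x^2+2)).div_const 3)).add
        ((h5.const_mul (x^4+4*x^2+1)).div_const 5)).sub
        ((h7.const_mul (2*x^4+2*x^2)).div_const 7)).add
        ((h9.const_mul (x^4)).div_const 9)).const_mul (225/256 : ℝ))
    exact H.congr_deriv (by ring)
  rw [intervalIntegral.integral_eq_sub_of_hasDerivAt key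
    (Continuous.intervalIntegrable (by fun_prop) _ _)]
  ring

theorem biweight_kernel_inner_product
    (K : ℝ → ℝ)
    (hK : ∀ u, K u = Set.indicator (Set.Icc (-1 : ℝ) 1) (fun v => 15 / 16 * (1 - v ^ 2) ^ 2) u) :
    ∀ x : ℝ, 0 < x →
      (∫ u, K u * K (x * u)) / (∫ u, (K u) ^ 2)
        = 1 / 16 * (21 * min (1 / x) 1 - 6 * x ^ 2 * (min (1 / x) 1) ^ 5
            + x ^ 4 * (min (1 / x) 1) ^ 9) := by
  intro x hx
  have hden : (∫ u, (K u) ^ 2) = 5/7 := by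
    have hsq : ∀ u, (K u) ^ 2 = K u * K (1 * u) := by
      intro u; rw [one_mul]; ring
    simp only [hsq]
    rw [biweight_aux K hK 1 one_pos]
    norm_num
  rw [hden, biweight_aux K hK x hx]
  rcases min_cases (1/x) 1 with ⟨hmeq, hle⟩ | ⟨hmeq, hle⟩
  · rw [hmeq]
    have hx0 : x ≠ 0 := ne_of_gt hx
    field_simp
    ring
  · rw [hmeq]
    ring
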